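/- For system (dRTL+ l), adding the six three-leg expressions (N), (E), (SE), (S), (W), (NW) centered at x_k (each equal to 0) yields the additive discrete Toda equation: e^{x̃_k−x_k} − e^{x_k−x̲_k} = hα e^{x_{k+1}−x_k} − hα e^{x_k−x_{k-1}} − h(α−h)e^{x̲_{k+1}−x_k}/(1−hα e^{x̲_{k+1}−x_k}) + h(α−h)e^{x_k−x̃_{k-1}}/(1−hα e^{x_k−x̃_{k-1}}), with all auxiliary-variable terms cancelling telescopically. -/
import Mathlib


/-- For system (dRTL+ l), the six three-leg equations (N), (E), (SE), (S), (W),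
(NW) centered at `x_k` imply (by adding, with telescoping cancellation of the
auxiliary variables) the additive discrete Toda equation.
Here `X = e^{x_k}`, `Ea = e^{x̃_k−x_k}`, `Eb = e^{x_k−x̲_k}`,
`Ec = e^{x_k−x_{k-1}}`, `Ed = e^{x_{k+1}−x_k}`, `Eu = e^{x̲_{k+1}−x_k}`,
`Ev = e^{x_k−x̃_{k-1}}`. -/
theorem dRTLl_sum_of_three_legs
    (α h lam : ℂ) (X Ea Eb Ec Ed Eu Ev Psik Psik1 Psitk Phik1 Phitk Phitk1 : ℂ)
    (hX : X ≠ 0)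
    (d1 : Psitk + h * X ≠ 0) (d2 : X + α * Psik1 ≠ 0)
    (d3 : 1 - h * α * Eu ≠ 0) (d4 : X + h * Phik1 ≠ 0)
    (d5 : Psik ≠ 0) (d6 : Phitk + α * X ≠ 0)
    (d7 : 1 - h * α * Ev ≠ 0)
    (hN : Ea + h * Phitk1 / X - (1 - h * lam) * Psitk / (Psitk + h * X) = 0)
    (hE : -(α * Ed) - Phitk1 / X
          + (1 - α * lam) * Psik1 / (X + α * Psik1) = 0)
    (hSE : (α - h) * Eu / (1 - h * α * Eu)
           - (1 - α * lam) * Psik1 / (X + α * Psik1)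
           + (1 - h * lam) * Phik1 / (X + h * Phik1) = 0)
    (hS : -Eb + (1 - h * lam) * X / (X + h * Phik1) - h * X / Psik = 0)
    (hW : α * Ec + X / Psik
          - (1 - α * lam) * X / (Phitk + α * X) = 0)
    (hNW : -((α - h) * Ev / (1 - h * α * Ev))
           + (1 - α * lam) * X / (Phitk + α * X)
           - (1 - h * lam) * X / (Psitk + h * X) = 0) :
    Ea - Eb = h * α * Ed - h * α * Ec
      - h * (α - h) * Eu / (1 - h * α * Eu)
      + h * (α - h) * Ev / (1 - h * α * Ev) := by
  have c1 : (Psitk + h * X) / (Psitk + h * X) = 1 := div_self d1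
  have c4 : (X + h * Phik1) / (X + h * Phik1) = 1 := div_self d4
  have c2 : (X + α * Psik1) / (X + α * Psik1) = 1 := div_self d2
  have c6 : (Phitk + α * X) / (Phitk + α * X) = 1 := div_self d6
  have c5 : Psik / Psik = 1 := div_self d5
  have cX : X / X = 1 := div_self hX
  linear_combination hN + hS + h*hE + h*hSE + h*hW + h*hNW
    + (1 - h*lam)*c1 - (1 - h*lam)*c4
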